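/- Let l ≥ 1 be an integer, a ∈ ℝ, and let J be the l×l Jordan cell matrix with a on the diagonal and 1 on the superdiagonal. Then for every t > 0, the operator norm of t^J := exp((log t)·J) induced by the maximum norm ‖x‖_∞ = max_{1≤i≤l}|x_i| on ℝ^l equals t^a · Σ_{j=0}^{l−1} |log t|^j / j!. -/

import Mathlib

open MeasureTheory ProbabilityTheory Filter Matrix Real

noncomputable section

/-- `t ^ A := exp((log t) • A)` for a real square matrix `A` and `t > 0`. -/
def matPow {d : ℕ} (t : ℝ) (A : Matrix (Fin d) (Fin d) ℝ) : Matrix (Fin d) (Fin d) ℝ :=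
  NormedSpace.exp (Real.log t • A)

/-- The `l × l` Jordan cell matrix with `a` on the diagonal and `1` on the superdiagonal. -/
def jordanCell (l : ℕ) (a : ℝ) : Matrix (Fin l) (Fin l) ℝ :=
  Matrix.of fun i j => if (i : ℕ) = (j : ℕ) then a else if (j : ℕ) = (i : ℕ) + 1 then 1 else 0

/-- The operator norm of a matrix induced by the maximum norm
`‖x‖_∞ = max_i |x i|` on `ℝ^l` (the sup norm is the norm of the standard
`Pi` normed space structure on `Fin l → ℝ`). -/
def supOpNorm {l : ℕ} (A : Matrix (Fin l) (Fin l) ℝ) : ℝ :=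
  ‖LinearMap.toContinuousLinearMap (Matrix.mulVecLin A)‖

lemma jordanCell_zero_apply (l : ℕ) (m j : Fin l) :
    jordanCell l 0 m j = if (j : ℕ) = (m : ℕ) + 1 then 1 else 0 := by
  unfold jordanCell
  simp only [Matrix.of_apply]
  by_cases h : (m : ℕ) = (j : ℕ)
  · rw [if_pos h, if_neg (by omega)]
  · rw [if_neg h]

lemma jordanCell_zero_pow (l : ℕ) (k : ℕ) (i j : Fin l) :
    ((jordanCell l 0) ^ k) i j = if (j : ℕ) = (i : ℕ) + k then 1 else 0 := by
  induction k generalizing j with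
  | zero =>
    rw [pow_zero, Matrix.one_apply]
    by_cases h : i = j
    · subst h; simp
    · rw [if_neg h, if_neg (by rw [Fin.ext_iff] at h; omega)]
  | succ k ih =>
    rw [pow_succ, Matrix.mul_apply]
    have hterm : ∀ m : Fin l, (jordanCell l 0 ^ k) i m * jordanCell l 0 m j =
        if (m : ℕ) = (i : ℕ) + k then (if (j : ℕ) = (m : ℕ) + 1 then 1 else 0) else 0 := by
      intro m
      rw [ih m, jordanCell_zero_apply, ite_mul, one_mul, zero_mul]
    simp only [hterm]
    by_cases h : (i : ℕ) + k < l
    · rw [Finset.sum_eq_single (⟨(i : ℕ) + k, h⟩ : Fin l)]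
      · rw [if_pos rfl]; rfl
      · intro m _ hm
        exact if_neg (fun hc => hm (Fin.ext hc))
      · intro hmem; exact absurd (Finset.mem_univ _) hmem
    · have hj := j.isLt
      rw [Finset.sum_eq_zero, if_neg (by omega)]
      intro m _
      have hm := m.isLt
      rw [if_neg (by omega)]

lemma jordanCell_zero_pow_eq_zero (l n : ℕ) (hn : l ≤ n) : (jordanCell l 0) ^ n = 0 := by
  ext i j
  rw [jordanCell_zero_pow, Matrix.zero_apply]
  have hj := j.isLt
  rw [if_neg (by omega)]

lemma exp_smul_jordanCell_zero (l : ℕ) (c : ℝ) (i j : Fin l) :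
    NormedSpace.exp (c • jordanCell l 0) i j =
      if (i : ℕ) ≤ (j : ℕ) then
        c ^ ((j : ℕ) - (i : ℕ)) / (Nat.factorial ((j : ℕ) - (i : ℕ)) : ℝ)
      else 0 := by
  have hzero : ∀ n ∉ Finset.range l,
      ((Nat.factorial n : ℝ)⁻¹ • (c • jordanCell l 0) ^ n) = 0 := by
    intro n hn
    rw [Finset.mem_range, not_lt] at hn
    rw [smul_pow, jordanCell_zero_pow_eq_zero l n hn, smul_zero, smul_zero]
  have hexp : NormedSpace.exp (c • jordanCell l 0) =
      ∑ n ∈ Finset.range l, ((Nat.factorial n : ℝ)⁻¹ * c ^ n) • (jordanCell l 0) ^ n := by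
    rw [NormedSpace.exp_eq_tsum (𝕂 := ℝ)]
    beta_reduce
    rw [tsum_eq_sum hzero]
    simp_rw [smul_pow, smul_smul]
  rw [hexp, Matrix.sum_apply]
  simp only [Matrix.smul_apply, jordanCell_zero_pow, smul_eq_mul, mul_ite, mul_one, mul_zero]
  have hj := j.isLt
  by_cases hij : (i : ℕ) ≤ (j : ℕ)
  · rw [if_pos hij, Finset.sum_eq_single ((j : ℕ) - (i : ℕ))]
    · rw [if_pos (by omega), div_eq_mul_inv, mul_comm]
    · intro n _ hn; rw [if_neg (by omega)]
    · intro hmem; exact absurd (Finset.mem_range.mpr (by omega)) hmem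
  · rw [if_neg hij, Finset.sum_eq_zero]
    intro n _; rw [if_neg (by omega)]

lemma smul_jordanCell_decomp (l : ℕ) (a c : ℝ) :
    c • jordanCell l a = (c * a) • (1 : Matrix (Fin l) (Fin l) ℝ) + c • jordanCell l 0 := by
  ext i j
  by_cases h : (i : ℕ) = (j : ℕ)
  · have h' : i = j := Fin.ext h
    subst h'
    simp [jordanCell, Matrix.one_apply]
  · have h' : i ≠ j := fun e => h (by rw [e])
    simp only [Matrix.smul_apply, Matrix.add_apply, Matrix.one_apply_ne h', jordanCell,
      Matrix.of_apply, if_neg h, smul_eq_mul, mul_zero, zero_add]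

lemma matPow_jordanCell_apply (l : ℕ) (a t : ℝ) (i j : Fin l) :
    matPow t (jordanCell l a) i j =
      Real.exp (Real.log t * a) *
        (if (i : ℕ) ≤ (j : ℕ) then
          Real.log t ^ ((j : ℕ) - (i : ℕ)) / (Nat.factorial ((j : ℕ) - (i : ℕ)) : ℝ)
        else 0) := by
  set c := Real.log t
  have hcomm : Commute ((c * a) • (1 : Matrix (Fin l) (Fin l) ℝ)) (c • jordanCell l 0) :=
    (Commute.one_left _).smul_left _
  have hsplit : matPow t (jordanCell l a) =
      NormedSpace.exp ((c * a) • (1 : Matrix (Fin l) (Fin l) ℝ)) *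
        NormedSpace.exp (c • jordanCell l 0) := by
    rw [matPow, smul_jordanCell_decomp l a c]
    exact Matrix.exp_add_of_commute _ _ hcomm
  have hscal : NormedSpace.exp ((c * a) • (1 : Matrix (Fin l) (Fin l) ℝ)) =
      Real.exp (c * a) • (1 : Matrix (Fin l) (Fin l) ℝ) := by
    letI : SeminormedRing (Matrix (Fin l) (Fin l) ℝ) := Matrix.linftyOpSemiNormedRing
    letI : NormedRing (Matrix (Fin l) (Fin l) ℝ) := Matrix.linftyOpNormedRing
    letI : NormedAlgebra ℝ (Matrix (Fin l) (Fin l) ℝ) := Matrix.linftyOpNormedAlgebra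
    have h := NormedSpace.algebraMap_exp_comm (𝕂 := ℝ) (𝔸 := Matrix (Fin l) (Fin l) ℝ) (c * a)
    rw [← Real.exp_eq_exp_ℝ] at h
    rw [← Algebra.algebraMap_eq_smul_one, ← Algebra.algebraMap_eq_smul_one]
    exact h.symm
  rw [hsplit, hscal, Matrix.smul_mul, Matrix.one_mul, Matrix.smul_apply,
    exp_smul_jordanCell_zero, smul_eq_mul]

/-- For the Jordan cell `J` of size `l ≥ 1` with eigenvalue `a` and any `t > 0`, the
operator norm of `t^J` induced by the maximum norm equals
`t^a * ∑_{j=0}^{l-1} |log t|^j / j!`. -/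
theorem supOpNorm_matPow_jordanCell (l : ℕ) (hl : 1 ≤ l) (a : ℝ) (t : ℝ) (ht : 0 < t) :
    supOpNorm (matPow t (jordanCell l a)) =
      t ^ a * ∑ j ∈ Finset.range l, |Real.log t| ^ j / (Nat.factorial j : ℝ) := by
  classical
  set c := Real.log t with hc
  set r := Real.exp (c * a) with hr
  have hrpos : 0 < r := Real.exp_pos _
  set A := matPow t (jordanCell l a) with hA
  have habs : ∀ i j : Fin l, ‖A i j‖ =
      r * (if (i : ℕ) ≤ (j : ℕ) then
        |c| ^ ((j : ℕ) - (i : ℕ)) / (Nat.factorial ((j : ℕ) - (i : ℕ)) : ℝ) else 0) := by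
    intro i j
    rw [Real.norm_eq_abs, hA, matPow_jordanCell_apply, abs_mul, ← hc, ← hr, abs_of_pos hrpos]
    congr 1
    by_cases hij : (i : ℕ) ≤ (j : ℕ)
    · rw [if_pos hij, if_pos hij, abs_div, abs_pow, Nat.abs_cast]
    · rw [if_neg hij, if_neg hij, abs_zero]
  have hrow : ∀ i : Fin l, ∑ j : Fin l, ‖A i j‖ =
      r * ∑ k ∈ Finset.range (l - (i : ℕ)), |c| ^ k / (Nat.factorial k : ℝ) := by
    intro i
    simp only [habs i]
    rw [← Finset.mul_sum]
    congr 1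
    rw [Fin.sum_univ_eq_sum_range (fun jn => if (i : ℕ) ≤ jn then
      |c| ^ (jn - (i : ℕ)) / (Nat.factorial (jn - (i : ℕ)) : ℝ) else 0) l]
    rw [← Finset.sum_filter]
    have hfil : (Finset.range l).filter (fun jn => (i : ℕ) ≤ jn) = Finset.Ico (i : ℕ) l := by
      ext x
      simp only [Finset.mem_filter, Finset.mem_range, Finset.mem_Ico]
      omega
    rw [hfil, Finset.sum_Ico_eq_sum_range]
    refine Finset.sum_congr rfl fun k _ => ?_
    simp [Nat.add_sub_cancel_left]
  have hrowle : ∀ i : Fin l, ∑ j : Fin l, ‖A i j‖ ≤ ∑ j : Fin l, ‖A (⟨0, hl⟩ : Fin l) j‖ := by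
    intro i
    rw [hrow i, hrow ⟨0, hl⟩]
    refine mul_le_mul_of_nonneg_left ?_ hrpos.le
    refine Finset.sum_le_sum_of_subset_of_nonneg
      (Finset.range_subset_range.mpr (by simp [Nat.sub_le])) (fun k _ _ => by positivity)
  letI instN : NormedAddCommGroup (Matrix (Fin l) (Fin l) ℝ) := Matrix.linftyOpNormedAddCommGroup
  have h1 : supOpNorm A = ‖A‖ := by
    rw [supOpNorm, Matrix.linfty_opNorm_eq_opNorm]
    congr 1
  have hsup : (Finset.univ.sup fun i : Fin l => ∑ j, ‖A i j‖₊) =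
      ∑ j, ‖A (⟨0, hl⟩ : Fin l) j‖₊ := by
    apply le_antisymm
    · apply Finset.sup_le
      intro i _
      rw [← NNReal.coe_le_coe]
      push_cast [coe_nnnorm]
      exact hrowle i
    · exact Finset.le_sup (f := fun i : Fin l => ∑ j, ‖A i j‖₊) (Finset.mem_univ (⟨0, hl⟩ : Fin l))
  have h2 : ‖A‖ = ∑ j : Fin l, ‖A (⟨0, hl⟩ : Fin l) j‖ := by
    rw [Matrix.linfty_opNorm_def, hsup]
    push_cast [coe_nnnorm]
    rfl
  have h3 : ∑ j : Fin l, ‖A (⟨0, hl⟩ : Fin l) j‖ =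
      r * ∑ k ∈ Finset.range l, |c| ^ k / (Nat.factorial k : ℝ) := by
    rw [hrow]
    norm_num
  rw [h1, h2, h3, hr, hc, Real.rpow_def_of_pos ht]
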